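/- For 1/2 ≤ η ≤ 1 and E > 0, the superposition-coding rate region boundary R_{B'}(R_{A'}) = g((1−η)E) − g(((1−η)/η)·g⁻¹(R_{A'})) is a decreasing, concave function of R_{A'} on [0, g(ηE)], with R_{B'}(0) = g((1−η)E) and R_{B'}(g(ηE)) = 0. -/

import Mathlib

open Real Set Filter

noncomputable def g (E : ℝ) : ℝ := (E + 1) * Real.log (E + 1) - E * Real.log E

noncomputable def ginv : ℝ → ℝ := Function.invFunOn g (Set.Ici 0)

namespace BBAux

/-- derivative of `g` -/
noncomputable def gd (t : ℝ) : ℝ := Real.log (t + 1) - Real.log t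

/-- second derivative of `g` -/
noncomputable def gdd (t : ℝ) : ℝ := 1 / (t + 1) - 1 / t

noncomputable def F (t : ℝ) : ℝ := (t + 1) * gd t

noncomputable def D (l t : ℝ) : ℝ := l * gd (l * t) * (gd t)⁻¹

lemma g_zero : g 0 = 0 := by simp [g]

lemma g_cont : Continuous g := by
  have h : Continuous fun x : ℝ => x * Real.log x := Real.continuous_mul_log
  exact (h.comp (continuous_id.add continuous_const)).sub h

lemma hasDerivAt_g {t : ℝ} (ht : 0 < t) : HasDerivAt g (gd t) t := by
  have h1 : HasDerivAt (fun x : ℝ => (x + 1) * Real.log (x + 1))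
      ((Real.log (t + 1) + 1) * 1) t := by
    have h := (Real.hasDerivAt_mul_log (x := t + 1) (by positivity)).comp t
      ((hasDerivAt_id t).add_const 1)
    exact h
  have h2 : HasDerivAt (fun x : ℝ => x * Real.log x) (Real.log t + 1) t :=
    Real.hasDerivAt_mul_log ht.ne'
  have h3 := h1.sub h2
  have : (Real.log (t + 1) + 1) * 1 - (Real.log t + 1) = gd t := by
    simp [gd]
  rw [this] at h3
  exact h3

lemma gd_pos {t : ℝ} (ht : 0 < t) : 0 < gd t :=
  sub_pos.2 (Real.log_lt_log ht (by linarith))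

lemma hasDerivAt_gd {t : ℝ} (ht : 0 < t) : HasDerivAt gd (gdd t) t := by
  have h1 : HasDerivAt (fun x : ℝ => Real.log (x + 1)) ((t + 1)⁻¹ * 1) t :=
    (Real.hasDerivAt_log (by positivity)).comp t ((hasDerivAt_id t).add_const 1)
  have h2 : HasDerivAt Real.log t⁻¹ t := Real.hasDerivAt_log ht.ne'
  have h3 := h1.sub h2
  have : (t + 1)⁻¹ * 1 - t⁻¹ = gdd t := by
    simp [gdd]
  rw [this] at h3
  exact h3

lemma gdd_eq {t : ℝ} (ht : 0 < t) : gdd t = -(1 / (t * (t + 1))) := by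
  have h1 : t ≠ 0 := ht.ne'
  have h2 : t + 1 ≠ 0 := by positivity
  rw [gdd, div_sub_div _ _ h2 h1, ← neg_div]
  congr 1 <;> ring

lemma g_strictMonoOn : StrictMonoOn g (Set.Ici 0) := by
  apply strictMonoOn_of_deriv_pos (convex_Ici 0) g_cont.continuousOn
  intro x hx
  rw [interior_Ici] at hx
  rw [(hasDerivAt_g hx).deriv]
  exact gd_pos hx

lemma g_monotoneOn : MonotoneOn g (Set.Ici 0) := g_strictMonoOn.monotoneOn

lemma g_nonneg {t : ℝ} (ht : 0 ≤ t) : 0 ≤ g t := by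
  rw [← g_zero]
  exact g_monotoneOn (Set.mem_Ici.mpr (le_refl 0)) ht ht

lemma ginv_g {t : ℝ} (ht : 0 ≤ t) : ginv (g t) = t :=
  g_strictMonoOn.injOn.leftInvOn_invFunOn ht

lemma exists_g_eq {b x : ℝ} (hb : 0 ≤ b) (hx : x ∈ Set.Icc 0 (g b)) :
    ∃ t ∈ Set.Icc 0 b, g t = x := by
  have h := intermediate_value_Icc hb g_cont.continuousOn
  have hx' : x ∈ Set.Icc (g 0) (g b) := by rwa [g_zero]
  obtain ⟨t, ht, hgt⟩ := h hx'
  exact ⟨t, ht, hgt⟩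

lemma ginv_spec {b x : ℝ} (hb : 0 ≤ b) (hx : x ∈ Set.Icc 0 (g b)) :
    ginv x ∈ Set.Icc 0 b ∧ g (ginv x) = x := by
  obtain ⟨t, ht, hgt⟩ := exists_g_eq hb hx
  have : ginv x = t := by rw [← hgt, ginv_g ht.1]
  rw [this]
  exact ⟨ht, hgt⟩

lemma ginv_monotoneOn {b : ℝ} (hb : 0 ≤ b) :
    MonotoneOn ginv (Set.Icc 0 (g b)) := by
  intro x hx y hy hxy
  obtain ⟨hxm, hxg⟩ := ginv_spec hb hx
  obtain ⟨hym, hyg⟩ := ginv_spec hb hy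
  have h := g_strictMonoOn.le_iff_le (a := ginv x) (b := ginv y)
    (Set.Icc_subset_Ici_self hxm) (Set.Icc_subset_Ici_self hym)
  rw [← h]
  rw [hxg, hyg]
  exact hxy

lemma ginv_contOn {b : ℝ} (hb : 0 ≤ b) : ContinuousOn ginv (Set.Icc 0 (g b)) := by
  set M := g b with hM
  have hmaps : ∀ t : Set.Icc (0:ℝ) b, g t ∈ Set.Icc 0 M := by
    rintro ⟨t, ht0, htb⟩
    exact ⟨g_nonneg ht0, g_monotoneOn ht0 hb htb⟩
  have hinj : Function.Injective (fun t : Set.Icc (0:ℝ) b => (⟨g t, hmaps t⟩ : Set.Icc 0 M)) := by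
    rintro ⟨s, hs⟩ ⟨t, ht⟩ h
    simp only [Subtype.mk.injEq] at h ⊢
    exact g_strictMonoOn.injOn (Set.Icc_subset_Ici_self hs) (Set.Icc_subset_Ici_self ht) h
  have hsurj : Function.Surjective
      (fun t : Set.Icc (0:ℝ) b => (⟨g t, hmaps t⟩ : Set.Icc 0 M)) := by
    rintro ⟨x, hx⟩
    obtain ⟨t, ht, hgt⟩ := exists_g_eq hb hx
    exact ⟨⟨t, ht⟩, by simp [hgt]⟩
  let e : Set.Icc (0:ℝ) b ≃ Set.Icc (0:ℝ) M := Equiv.ofBijective _ ⟨hinj, hsurj⟩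
  have hc : Continuous (fun t : Set.Icc (0:ℝ) b => (⟨g t, hmaps t⟩ : Set.Icc 0 M)) :=
    Continuous.subtype_mk (g_cont.comp continuous_subtype_val) _
  haveI : CompactSpace (Set.Icc (0:ℝ) b) := isCompact_iff_compactSpace.mp isCompact_Icc
  let h : Set.Icc (0:ℝ) b ≃ₜ Set.Icc (0:ℝ) M := Continuous.homeoOfEquivCompactToT2 (f := e) hc
  rw [continuousOn_iff_continuous_restrict]
  have heq : Set.restrict (Set.Icc 0 M) ginv = fun x => ((h.symm x : Set.Icc (0:ℝ) b) : ℝ) := by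
    funext x
    have hx : (e (h.symm x) : ℝ) = (x : ℝ) := by
      have : e (h.symm x) = x := e.apply_symm_apply x
      exact congrArg Subtype.val this
    have hgx : g ((h.symm x : Set.Icc (0:ℝ) b) : ℝ) = (x : ℝ) := hx
    show ginv x = _
    rw [← hgx, ginv_g (h.symm x).2.1]
  change Continuous (Set.restrict (Set.Icc 0 M) ginv)
  rw [heq]
  exact continuous_subtype_val.comp h.symm.continuous

lemma ginv_pos {b x : ℝ} (hb : 0 < b) (hx : x ∈ Set.Ioo 0 (g b)) : 0 < ginv x := by
  obtain ⟨hm, hg⟩ := ginv_spec hb.le ⟨hx.1.le, hx.2.le⟩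
  rcases lt_or_eq_of_le hm.1 with h | h
  · exact h
  · exfalso
    rw [← h] at hg
    rw [g_zero] at hg
    exact hx.1.ne' hg.symm

lemma hasDerivAt_ginv {b x : ℝ} (hb : 0 < b) (hx : x ∈ Set.Ioo 0 (g b)) :
    HasDerivAt ginv (gd (ginv x))⁻¹ x := by
  obtain ⟨hm, hg⟩ := ginv_spec hb.le ⟨hx.1.le, hx.2.le⟩
  have htpos : 0 < ginv x := ginv_pos hb hx
  apply HasDerivAt.of_local_left_inverse
  · exact (ginv_contOn hb.le).continuousAt (Icc_mem_nhds hx.1 hx.2)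
  · rw [hg] at *
    exact hasDerivAt_g htpos
  · exact (gd_pos htpos).ne'
  · filter_upwards [Ioo_mem_nhds hx.1 hx.2] with y hy
    exact (ginv_spec hb.le ⟨hy.1.le, hy.2.le⟩).2

lemma F_nonneg {t : ℝ} (ht : 0 < t) : 0 ≤ F t :=
  mul_nonneg (by linarith) (gd_pos ht).le

lemma hasDerivAt_F {t : ℝ} (ht : 0 < t) : HasDerivAt F (gd t - 1 / t) t := by
  have h1 : HasDerivAt (fun x : ℝ => x + 1) 1 t := (hasDerivAt_id t).add_const 1
  have h2 := h1.mul (hasDerivAt_gd ht)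
  have : 1 * gd t + (t + 1) * gdd t = gd t - 1 / t := by
    rw [gdd_eq ht]
    have h1 : t ≠ 0 := ht.ne'
    have h2 : t + 1 ≠ 0 := by positivity
    field_simp
    ring
  rw [this] at h2
  exact h2

lemma F_deriv_neg {t : ℝ} (ht : 0 < t) : gd t - 1 / t < 0 := by
  have h1 : (0:ℝ) < (t + 1) / t := by positivity
  have h2 : (t + 1) / t ≠ 1 := by
    have : (1:ℝ) < (t + 1) / t := by
      rw [lt_div_iff₀ ht]; linarith
    exact this.ne'
  have h3 := Real.log_lt_sub_one_of_pos h1 h2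
  rw [Real.log_div (by positivity) ht.ne'] at h3
  have : (t + 1) / t - 1 = 1 / t := by field_simp; ring
  rw [this] at h3
  simpa [gd] using sub_neg.mpr h3

lemma F_anti : AntitoneOn F (Set.Ioi 0) := by
  apply antitoneOn_of_deriv_nonpos (convex_Ioi 0)
  · intro t ht
    exact (hasDerivAt_F ht).continuousAt.continuousWithinAt
  · intro t ht
    rw [interior_Ioi] at ht
    exact (hasDerivAt_F ht).differentiableAt.differentiableWithinAt
  · intro t ht
    rw [interior_Ioi] at ht
    rw [(hasDerivAt_F ht).deriv]
    exact (F_deriv_neg ht).le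

lemma hasDerivAt_D {l t : ℝ} (hl : 0 < l) (ht : 0 < t) :
    HasDerivAt (D l)
      (l * (gdd (l * t) * l * (gd t)⁻¹ + gd (l * t) * (-gdd t / gd t ^ 2))) t := by
  have hlt : 0 < l * t := mul_pos hl ht
  have hid : HasDerivAt (fun x : ℝ => l * x) l t := by
    simpa using (hasDerivAt_id t).const_mul l
  have h1 : HasDerivAt (fun x : ℝ => gd (l * x)) (gdd (l * t) * l) t :=
    (hasDerivAt_gd hlt).comp t hid
  have h2 : HasDerivAt (fun x : ℝ => (gd x)⁻¹) (-gdd t / gd t ^ 2) t :=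
    (hasDerivAt_gd ht).inv (gd_pos ht).ne'
  have h3 := (h1.mul h2).const_mul l
  have heq : (fun x : ℝ => l * (gd (l * x) * (gd x)⁻¹)) = D l := by
    funext x; simp only [D]; ring
  rw [← heq]
  exact h3

lemma D_deriv_nonneg {l t : ℝ} (hl0 : 0 < l) (hl1 : l ≤ 1) (ht : 0 < t) :
    0 ≤ l * (gdd (l * t) * l * (gd t)⁻¹ + gd (l * t) * (-gdd t / gd t ^ 2)) := by
  have hlt : 0 < l * t := mul_pos hl0 ht
  have hA : 0 < gd t := gd_pos ht
  have key : F t ≤ F (l * t) := F_anti hlt ht (by nlinarith)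
  have hexpr : l * (gdd (l * t) * l * (gd t)⁻¹ + gd (l * t) * (-gdd t / gd t ^ 2)) =
      l / (t * (t + 1) * (l * t + 1) * gd t ^ 2) * (F (l * t) - F t) := by
    rw [gdd_eq hlt, gdd_eq ht]
    have h1 : t ≠ 0 := ht.ne'
    have h2 : t + 1 ≠ 0 := by positivity
    have h3 : l * t ≠ 0 := hlt.ne'
    have h4 : l * t + 1 ≠ 0 := by positivity
    have h5 : gd t ≠ 0 := hA.ne'
    simp only [F]
    field_simp
    ring
  rw [hexpr]
  apply mul_nonneg
  · positivity
  · linarith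

lemma D_contOn (l : ℝ) (hl : 0 < l) : ContinuousOn (D l) (Set.Ioi 0) := by
  intro t ht
  exact (hasDerivAt_D hl ht).continuousAt.continuousWithinAt

lemma D_mono {l : ℝ} (hl0 : 0 < l) (hl1 : l ≤ 1) : MonotoneOn (D l) (Set.Ioi 0) := by
  apply monotoneOn_of_deriv_nonneg (convex_Ioi 0) (D_contOn l hl0)
  · intro t ht
    rw [interior_Ioi] at ht
    exact (hasDerivAt_D hl0 ht).differentiableAt.differentiableWithinAt
  · intro t ht
    rw [interior_Ioi] at ht
    rw [(hasDerivAt_D hl0 ht).deriv]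
    exact D_deriv_nonneg hl0 hl1 ht

lemma hasDerivAt_phi {l b x : ℝ} (hl : 0 < l) (hb : 0 < b) (hx : x ∈ Set.Ioo 0 (g b)) :
    HasDerivAt (fun x => g (l * ginv x)) (D l (ginv x)) x := by
  have htpos : 0 < ginv x := ginv_pos hb hx
  have hltpos : 0 < l * ginv x := mul_pos hl htpos
  have hinner : HasDerivAt (fun y => l * ginv y) (l * (gd (ginv x))⁻¹) x :=
    (hasDerivAt_ginv hb hx).const_mul l
  have h := (hasDerivAt_g hltpos).comp x hinner
  have e : D l (ginv x) = gd (l * ginv x) * (l * (gd (ginv x))⁻¹) := by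
    simp only [D]; ring
  rw [e]
  exact h

lemma phi_convex {l b : ℝ} (hl0 : 0 < l) (hl1 : l ≤ 1) (hb : 0 < b) :
    ConvexOn ℝ (Set.Icc 0 (g b)) (fun x => g (l * ginv x)) := by
  apply MonotoneOn.convexOn_of_deriv (convex_Icc _ _)
  · exact g_cont.comp_continuousOn ((ginv_contOn hb.le).const_smul l)
  · rw [interior_Icc]
    intro x hx
    exact (hasDerivAt_phi hl0 hb hx).differentiableAt.differentiableWithinAt
  · rw [interior_Icc]
    intro x hx y hy hxy
    rw [(hasDerivAt_phi hl0 hb hx).deriv, (hasDerivAt_phi hl0 hb hy).deriv]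
    have hgx : 0 < ginv x := ginv_pos hb hx
    have hgy : 0 < ginv y := ginv_pos hb hy
    have hmono := ginv_monotoneOn hb.le (Set.Ioo_subset_Icc_self hx)
      (Set.Ioo_subset_Icc_self hy) hxy
    exact D_mono hl0 hl1 hgx hgy hmono

end BBAux

theorem broadcast_boundary_properties (η E : ℝ) (hη0 : 1 / 2 ≤ η) (hη1 : η ≤ 1)
    (hE : 0 < E) :
    AntitoneOn (fun R => g ((1 - η) * E) - g ((1 - η) / η * ginv R))
      (Set.Icc 0 (g (η * E))) ∧
    ConcaveOn ℝ (Set.Icc 0 (g (η * E)))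
      (fun R => g ((1 - η) * E) - g ((1 - η) / η * ginv R)) ∧
    g ((1 - η) * E) - g ((1 - η) / η * ginv 0) = g ((1 - η) * E) ∧
    g ((1 - η) * E) - g ((1 - η) / η * ginv (g (η * E))) = 0 := by
  have hηpos : 0 < η := by linarith
  have hb : 0 < η * E := mul_pos hηpos hE
  have hl0 : 0 ≤ (1 - η) / η := div_nonneg (by linarith) hηpos.le
  have hl1 : (1 - η) / η ≤ 1 := by
    rw [div_le_one hηpos]; linarith
  have hginv0 : ginv 0 = 0 := by
    conv_lhs => rw [← BBAux.g_zero]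
    exact BBAux.ginv_g le_rfl
  have hginvM : ginv (g (η * E)) = η * E := BBAux.ginv_g hb.le
  have hlb : (1 - η) / η * (η * E) = (1 - η) * E := by
    field_simp
  refine ⟨?_, ?_, ?_, ?_⟩
  · -- Antitone
    intro x hx y hy hxy
    obtain ⟨hxm, hxg⟩ := BBAux.ginv_spec hb.le hx
    obtain ⟨hym, hyg⟩ := BBAux.ginv_spec hb.le hy
    have hgm := BBAux.ginv_monotoneOn hb.le hx hy hxy
    have h1 : (1 - η) / η * ginv x ≤ (1 - η) / η * ginv y :=
      mul_le_mul_of_nonneg_left hgm hl0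
    have h2 : g ((1 - η) / η * ginv x) ≤ g ((1 - η) / η * ginv y) :=
      BBAux.g_monotoneOn (mul_nonneg hl0 hxm.1) (mul_nonneg hl0 hym.1) h1
    simp only
    linarith
  · -- Concave
    rcases eq_or_lt_of_le hη1 with h1 | h1
    · -- η = 1
      have hfun : (fun R => g ((1 - η) * E) - g ((1 - η) / η * ginv R)) =
          fun _ => (0 : ℝ) := by
        funext R
        rw [← h1]
        norm_num [BBAux.g_zero]
      rw [hfun]
      exact concaveOn_const 0 (convex_Icc _ _)
    · have hl0' : 0 < (1 - η) / η := div_pos (by linarith) hηpos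
      have hconv := BBAux.phi_convex hl0' hl1 hb
      have := (concaveOn_const (g ((1 - η) * E)) (convex_Icc (0:ℝ) (g (η * E)))).sub hconv
      exact this
  · rw [hginv0]
    norm_num [BBAux.g_zero]
  · rw [hginvM, hlb]
    ring
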